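/- Decomposition identity: let n ≥ 1, let u be the solution of u'' + A u + u' = 0 with data (u0,u1) ∈ H × H, and let U : [0,∞) → H be an (n+2)-times continuously differentiable function satisfying U''(t) + A U(t) + U'(t) = −v_{n−1,0}'(t) for all t ≥ 0, U(0) = 0 and U'(0) = (−1)ⁿ u1. Then u(t) = Σ_{ℓ=0}^{n−1} (d/dt)^ℓ v_{ℓ,0}(t) + (d/dt)ⁿ U(t) for all t ≥ 0. -/

import Mathlib

open scoped RealInnerProductSpace

universe u

/-- The auxiliary profiles `v_{ℓ,0}(t)` from Section 2.2.1. -/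
noncomputable def vl0 {H : Type u} [NormedAddCommGroup H] [InnerProductSpace ℝ H]
    [CompleteSpace H] (A : H →L[ℝ] H) (u0 u1 : H) (ℓ : ℕ) (t : ℝ) : H :=
  ((-1 : ℝ) ^ ℓ) •
    ((∑ j ∈ Finset.range (ℓ + 1),
        ((ℓ.choose j : ℝ) * ((-t) ^ j / (Nat.factorial j : ℝ))) •
          ((A ^ j) (NormedSpace.exp ((-t) • A) (u0 + u1))))
      - ∑ j ∈ Finset.range ℓ,
          (((ℓ - 1).choose j : ℝ) * ((-t) ^ j / (Nat.factorial j : ℝ))) •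
            ((A ^ j) (NormedSpace.exp ((-t) • A) u0)))

variable {H : Type u} [NormedAddCommGroup H] [InnerProductSpace ℝ H] [CompleteSpace H]

noncomputable def expv (A : H →L[ℝ] H) (x : H) (t : ℝ) : H :=
  NormedSpace.exp ((-t) • A) x

lemma expv_hasDerivAt (A : H →L[ℝ] H) (x : H) (t : ℝ) :
    HasDerivAt (expv A x) (-(A (expv A x t))) t := by
  have h := hasDerivAt_exp_smul_const' (𝕂 := ℝ) (-A) t
  have h2 := ((ContinuousLinearMap.apply ℝ H x).hasFDerivAt.comp_hasDerivAt t h)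
  simp only [Function.comp_def, ContinuousLinearMap.apply_apply,
    ContinuousLinearMap.mul_apply, ContinuousLinearMap.neg_apply] at h2
  have heq : (fun s : ℝ => (NormedSpace.exp (s • (-A))) x) = expv A x := by
    funext s; simp [expv, smul_neg, neg_smul]
  rw [heq] at h2
  convert h2 using 2
  simp [expv, smul_neg, neg_smul]

lemma exp_contDiff {n : WithTop ℕ∞} :
    ContDiff ℝ n (NormedSpace.exp : (H →L[ℝ] H) → (H →L[ℝ] H)) := by
  rw [contDiff_iff_contDiffAt]
  intro y
  exact (NormedSpace.exp_analytic y).contDiffAt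

lemma expv_contDiff (A : H →L[ℝ] H) (x : H) {n : WithTop ℕ∞} :
    ContDiff ℝ n (expv A x) := by
  have h1 : ContDiff ℝ n (fun t : ℝ => (-t) • A) :=
    (contDiff_id.neg).smul contDiff_const
  exact (ContinuousLinearMap.apply ℝ H x).contDiff.comp (exp_contDiff.comp h1)

noncomputable def Fj (A : H →L[ℝ] H) (x : H) (j : ℕ) (t : ℝ) : H :=
  ((-t) ^ j / (Nat.factorial j : ℝ)) • ((A ^ j) (expv A x t))

noncomputable def Fpre (A : H →L[ℝ] H) (x : H) : ℕ → ℝ → H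
  | 0 => fun _ => 0
  | (k+1) => Fj A x k

noncomputable def Gj (A : H →L[ℝ] H) (x : H) (j : ℕ) (t : ℝ) : H :=
  -(A (Fpre A x j t + Fj A x j t))

lemma Fj_contDiff (A : H →L[ℝ] H) (x : H) (j : ℕ) {n : WithTop ℕ∞} :
    ContDiff ℝ n (Fj A x j) := by
  apply ContDiff.smul
  · exact ((contDiff_id.neg).pow j).div_const _
  · exact (A ^ j).contDiff.comp (expv_contDiff A x)

lemma Fj_hasDerivAt (A : H →L[ℝ] H) (x : H) (j : ℕ) (t : ℝ) :
    HasDerivAt (Fj A x j) (Gj A x j t) t := by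
  cases j with
  | zero =>
    have heq : Fj A x 0 = expv A x := by funext s; simp [Fj]
    rw [heq]
    convert expv_hasDerivAt A x t using 1
    simp [Gj, Fpre, Fj, heq]
  | succ k =>
    have hc : HasDerivAt (fun s : ℝ => (-s) ^ (k+1) / (Nat.factorial (k+1) : ℝ))
        (-((-t) ^ k / (Nat.factorial k : ℝ))) t := by
      have h1 : HasDerivAt (fun s : ℝ => -s) (-1) t := (hasDerivAt_id t).neg
      have h2 := (h1.pow (k+1)).div_const (Nat.factorial (k+1) : ℝ)
      refine h2.congr_deriv ?_
      rw [Nat.add_sub_cancel, Nat.factorial_succ, Nat.cast_mul]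
      field_simp
    have hv : HasDerivAt (fun s => (A ^ (k+1)) (expv A x s))
        ((A ^ (k+1)) (-(A (expv A x t)))) t :=
      (A ^ (k+1)).hasFDerivAt.comp_hasDerivAt t (expv_hasDerivAt A x t)
    have h := hc.smul hv
    have heq : (fun s : ℝ => ((-s) ^ (k+1) / (Nat.factorial (k+1) : ℝ)) •
        ((A ^ (k+1)) (expv A x s))) = Fj A x (k+1) := by
      funext s; simp [Fj]
    have h : HasDerivAt (Fj A x (k+1)) _ t := h
    convert h using 1
    simp only [Gj, Fpre, Fj, map_add, map_smul, map_neg, neg_add, smul_neg]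
    have hpow : A ((A ^ k) (expv A x t)) = (A ^ (k+1)) (expv A x t) := by
      rw [← ContinuousLinearMap.mul_apply, ← pow_succ']
    have hpow2 : A ((A ^ (k+1)) (expv A x t)) = (A ^ (k+1)) (A (expv A x t)) := by
      rw [← ContinuousLinearMap.mul_apply, ← ContinuousLinearMap.mul_apply,
        ← pow_succ', ← pow_succ]
    rw [hpow, hpow2]
    module

lemma Fpre_contDiff (A : H →L[ℝ] H) (x : H) (j : ℕ) {n : WithTop ℕ∞} :
    ContDiff ℝ n (Fpre A x j) := by
  cases j with
  | zero => exact contDiff_const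
  | succ k => exact Fj_contDiff A x k

lemma Gj_contDiff (A : H →L[ℝ] H) (x : H) (j : ℕ) {n : WithTop ℕ∞} :
    ContDiff ℝ n (Gj A x j) :=
  (A.contDiff.comp ((Fpre_contDiff A x j).add (Fj_contDiff A x j))).neg

noncomputable def dv (A : H →L[ℝ] H) (u0 u1 : H) (ℓ : ℕ) (t : ℝ) : H :=
  ((-1 : ℝ) ^ ℓ) •
    ((∑ j ∈ Finset.range (ℓ + 1), (ℓ.choose j : ℝ) • Gj A (u0 + u1) j t)
      - ∑ j ∈ Finset.range ℓ, ((ℓ - 1).choose j : ℝ) • Gj A u0 j t)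

lemma vl0_eq (A : H →L[ℝ] H) (u0 u1 : H) (ℓ : ℕ) :
    vl0 A u0 u1 ℓ = fun t =>
      ((-1 : ℝ) ^ ℓ) •
        ((∑ j ∈ Finset.range (ℓ + 1), (ℓ.choose j : ℝ) • Fj A (u0 + u1) j t)
          - ∑ j ∈ Finset.range ℓ, ((ℓ - 1).choose j : ℝ) • Fj A u0 j t) := by
  funext t
  simp [vl0, Fj, expv, mul_smul]

lemma vl0_hasDerivAt (A : H →L[ℝ] H) (u0 u1 : H) (ℓ : ℕ) (t : ℝ) :
    HasDerivAt (vl0 A u0 u1 ℓ) (dv A u0 u1 ℓ t) t := by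
  rw [vl0_eq]
  exact (((HasDerivAt.fun_sum fun j _ => (Fj_hasDerivAt A (u0 + u1) j t).const_smul _).sub
    (HasDerivAt.fun_sum fun j _ => (Fj_hasDerivAt A u0 j t).const_smul _)).const_smul _)

lemma deriv_vl0 (A : H →L[ℝ] H) (u0 u1 : H) (ℓ : ℕ) :
    deriv (vl0 A u0 u1 ℓ) = dv A u0 u1 ℓ :=
  funext fun t => (vl0_hasDerivAt A u0 u1 ℓ t).deriv

lemma vl0_contDiff (A : H →L[ℝ] H) (u0 u1 : H) (ℓ : ℕ) {n : WithTop ℕ∞} :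
    ContDiff ℝ n (vl0 A u0 u1 ℓ) := by
  rw [vl0_eq]
  exact (((ContDiff.sum fun j _ => (Fj_contDiff A (u0 + u1) j).const_smul _).sub
    (ContDiff.sum fun j _ => (Fj_contDiff A u0 j).const_smul _)).const_smul _)

lemma dv_contDiff (A : H →L[ℝ] H) (u0 u1 : H) (ℓ : ℕ) {n : WithTop ℕ∞} :
    ContDiff ℝ n (dv A u0 u1 ℓ) :=
  (((ContDiff.sum fun j _ => (Gj_contDiff A (u0 + u1) j).const_smul _).sub
    (ContDiff.sum fun j _ => (Gj_contDiff A u0 j).const_smul _)).const_smul _)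

lemma sumid (A : H →L[ℝ] H) (x : H) (m : ℕ) (t : ℝ) :
    ∑ j ∈ Finset.range (m + 1), (m.choose j : ℝ) • (Gj A x j t + A (Fj A x j t))
      = ∑ j ∈ Finset.range m, ((m - 1).choose j : ℝ) • Gj A x j t := by
  set ψ : ℕ → H := fun j => -(A (Fj A x j t)) with hψ
  have hterm : ∀ j, Gj A x j t + A (Fj A x j t) = -(A (Fpre A x j t)) := by
    intro j
    simp only [Gj, map_add, neg_add]
    abel
  have hG : ∀ j, Gj A x j t = -(A (Fpre A x j t)) + ψ j := by
    intro j; simp only [Gj, map_add, neg_add, hψ]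
  have hpre : ∀ j, -(A (Fpre A x (j+1) t)) = ψ j := by
    intro j; simp [Fpre, hψ]
  have hpre0 : -(A (Fpre A x 0 t)) = 0 := by simp [Fpre]
  calc ∑ j ∈ Finset.range (m + 1), (m.choose j : ℝ) • (Gj A x j t + A (Fj A x j t))
      = ∑ j ∈ Finset.range (m + 1), (m.choose j : ℝ) • (-(A (Fpre A x j t))) := by
        simp_rw [hterm]
    _ = ∑ j ∈ Finset.range m, (m.choose (j+1) : ℝ) • ψ j := by
        rw [Finset.sum_range_succ']
        simp [hpre0, hpre]
    _ = ∑ j ∈ Finset.range m, ((m - 1).choose j : ℝ) • Gj A x j t := by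
        cases m with
        | zero => simp
        | succ p =>
          have hcs : ∀ j : ℕ, ((p+1).choose (j+1) : ℝ)
              = (p.choose j : ℝ) + (p.choose (j+1) : ℝ) := by
            intro j; exact_mod_cast congrArg Nat.cast (Nat.choose_succ_succ p j)
          simp only [Nat.add_sub_cancel]
          have hR : ∑ j ∈ Finset.range (p+1), (p.choose j : ℝ) • Gj A x j t
              = (∑ j ∈ Finset.range p, (p.choose (j+1) : ℝ) • ψ j)
                + ∑ j ∈ Finset.range (p+1), (p.choose j : ℝ) • ψ j := by
            calc ∑ j ∈ Finset.range (p+1), (p.choose j : ℝ) • Gj A x j t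
                = ∑ j ∈ Finset.range (p+1),
                    ((p.choose j : ℝ) • (-(A (Fpre A x j t))) + (p.choose j : ℝ) • ψ j) := by
                  refine Finset.sum_congr rfl fun j _ => ?_
                  rw [hG j, smul_add]
              _ = (∑ j ∈ Finset.range (p+1), (p.choose j : ℝ) • (-(A (Fpre A x j t))))
                  + ∑ j ∈ Finset.range (p+1), (p.choose j : ℝ) • ψ j :=
                  Finset.sum_add_distrib
              _ = _ := by
                  rw [Finset.sum_range_succ'
                    (fun j => (p.choose j : ℝ) • (-(A (Fpre A x j t)))) p]
                  simp [hpre0, hpre]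
          have hsplit : ∑ j ∈ Finset.range p, ((p+1).choose (j+1) : ℝ) • ψ j
              = (∑ j ∈ Finset.range p, (p.choose j : ℝ) • ψ j)
                + ∑ j ∈ Finset.range p, (p.choose (j+1) : ℝ) • ψ j := by
            rw [← Finset.sum_add_distrib]
            refine Finset.sum_congr rfl fun j _ => ?_
            rw [hcs j, add_smul]
          calc ∑ j ∈ Finset.range (p+1), ((p+1).choose (j+1) : ℝ) • ψ j
              = (∑ j ∈ Finset.range p, ((p+1).choose (j+1) : ℝ) • ψ j) + ψ p := by
                rw [Finset.sum_range_succ]; simp [Nat.choose_self]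
            _ = ((∑ j ∈ Finset.range p, (p.choose j : ℝ) • ψ j)
                + ∑ j ∈ Finset.range p, (p.choose (j+1) : ℝ) • ψ j) + ψ p := by rw [hsplit]
            _ = (∑ j ∈ Finset.range p, (p.choose (j+1) : ℝ) • ψ j)
                + ((∑ j ∈ Finset.range p, (p.choose j : ℝ) • ψ j) + ψ p) := by abel
            _ = (∑ j ∈ Finset.range p, (p.choose (j+1) : ℝ) • ψ j)
                + ∑ j ∈ Finset.range (p+1), (p.choose j : ℝ) • ψ j := by
                rw [Finset.sum_range_succ]; simp [Nat.choose_self]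
            _ = ∑ j ∈ Finset.range (p+1), (p.choose j : ℝ) • Gj A x j t := hR.symm

lemma keyid (A : H →L[ℝ] H) (u0 u1 : H) (m : ℕ) (t : ℝ) :
    dv A u0 u1 (m+1) t + A (vl0 A u0 u1 (m+1) t) = -(dv A u0 u1 m t) := by
  have ha := sumid A (u0 + u1) (m+1) t
  have hb := sumid A u0 m t
  simp only [Nat.add_sub_cancel] at ha
  rw [vl0_eq, dv, dv]
  simp only [Nat.add_sub_cancel]
  rw [← ha, ← hb]
  simp only [map_sub, map_sum, map_smul, smul_add, Finset.sum_add_distrib, smul_sub, pow_succ]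
  module

lemma uniq (A : H →L[ℝ] H) (y z : ℝ → H)
    (hy : Differentiable ℝ y) (hy' : Differentiable ℝ (deriv y))
    (hz : Differentiable ℝ z) (hz' : Differentiable ℝ (deriv z))
    (hyeq : ∀ t ≥ (0:ℝ), deriv (deriv y) t + A (y t) + deriv y t = 0)
    (hzeq : ∀ t ≥ (0:ℝ), deriv (deriv z) t + A (z t) + deriv z t = 0)
    (h0 : y 0 = z 0) (h1 : deriv y 0 = deriv z 0) : ∀ t ≥ (0:ℝ), y t = z t := by
  intro T hT
  set L : (H × H) →L[ℝ] (H × H) :=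
    ContinuousLinearMap.prod (ContinuousLinearMap.snd ℝ H H)
      (-(A.comp (ContinuousLinearMap.fst ℝ H H)) - ContinuousLinearMap.snd ℝ H H) with hL
  set f : ℝ → H × H := fun t => (y t, deriv y t) with hf
  set g : ℝ → H × H := fun t => (z t, deriv z t) with hg
  have hder : ∀ (w : ℝ → H), Differentiable ℝ w → Differentiable ℝ (deriv w) →
      (∀ t ≥ (0:ℝ), deriv (deriv w) t + A (w t) + deriv w t = 0) →
      ∀ t ∈ Set.Ico (0:ℝ) T,
        HasDerivWithinAt (fun s => (w s, deriv w s))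
          (L ((w t, deriv w t))) (Set.Ici t) t := by
    intro w hw hw' hweq t ht
    have h := (((hw t).hasDerivAt).prodMk ((hw' t).hasDerivAt)).hasDerivWithinAt
      (s := Set.Ici t)
    refine h.congr_deriv ?_
    have he := hweq t ht.1
    have : deriv (deriv w) t = -(A (w t)) - deriv w t := by
      rw [eq_sub_iff_add_eq, eq_neg_iff_add_eq_zero]
      linear_combination (norm := abel) he
    simp [hL, this, ContinuousLinearMap.prod_apply, ContinuousLinearMap.sub_apply,
      ContinuousLinearMap.neg_apply, ContinuousLinearMap.comp_apply]
  have key := dist_le_of_trajectories_ODE (v := fun _ : ℝ => (L : H × H → H × H))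
    (K := ‖L‖₊) (f := f) (g := g) (a := 0) (b := T) (δ := 0)
    (fun _ => L.lipschitz)
    ((hy.continuous.prodMk hy'.continuous).continuousOn)
    (hder y hy hy' hyeq)
    ((hz.continuous.prodMk hz'.continuous).continuousOn)
    (hder z hz hz' hzeq)
    (by simp [hf, hg, h0, h1])
  have := key T ⟨hT, le_refl T⟩
  rw [zero_mul, dist_le_zero] at this
  exact congrArg Prod.fst this

lemma Fj_zero0 (A : H →L[ℝ] H) (x : H) : Fj A x 0 0 = x := by
  simp [Fj, expv]

lemma Fj_zero_succ (A : H →L[ℝ] H) (x : H) (k : ℕ) : Fj A x (k+1) 0 = 0 := by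
  simp [Fj]

lemma sumFj_zero (A : H →L[ℝ] H) (x : H) (k : ℕ) (c : ℕ → ℝ) :
    ∑ j ∈ Finset.range (k+1), c j • Fj A x j 0 = c 0 • x := by
  rw [Finset.sum_range_succ']
  simp [Fj_zero_succ, Fj_zero0]

lemma vl0_zero_succ (A : H →L[ℝ] H) (u0 u1 : H) (m : ℕ) :
    vl0 A u0 u1 (m+1) 0 = ((-1:ℝ)^(m+1)) • u1 := by
  rw [vl0_eq]
  simp only [Nat.add_sub_cancel]
  rw [sumFj_zero, show Finset.range (m+1) = Finset.range (m+0+1) from rfl, sumFj_zero]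
  simp [add_sub_cancel_left]

lemma vl0_zero0 (A : H →L[ℝ] H) (u0 u1 : H) : vl0 A u0 u1 0 0 = u0 + u1 := by
  rw [vl0_eq]
  simp only [Nat.zero_sub, Finset.range_zero, Finset.sum_empty, sub_zero, zero_add]
  rw [show Finset.range (0+1) = Finset.range (0+0+1) from rfl, sumFj_zero]
  simp

lemma dv0 (A : H →L[ℝ] H) (u0 u1 : H) (t : ℝ) :
    A (vl0 A u0 u1 0 t) + dv A u0 u1 0 t = 0 := by
  rw [vl0_eq]
  simp [dv, Gj, Fpre, Finset.sum_range_one]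

lemma cd_deriv {m : ℕ} {f : ℝ → H} (hf : ContDiff ℝ ((m+1 : ℕ) : WithTop ℕ∞) f) :
    Differentiable ℝ f ∧ ContDiff ℝ (m : ℕ) (deriv f) := by
  have hcast : ((m+1 : ℕ) : WithTop ℕ∞) = ((m : ℕ) : WithTop ℕ∞) + 1 := by push_cast; rfl
  rw [hcast, contDiff_succ_iff_deriv] at hf
  exact ⟨hf.1, hf.2.2⟩

lemma deriv_eq_on_nonneg {f g : ℝ → H} (hf : Differentiable ℝ f) (hg : Differentiable ℝ g)
    (h : ∀ t ≥ (0:ℝ), f t = g t) : ∀ t ≥ (0:ℝ), deriv f t = deriv g t := by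
  intro t ht
  rcases eq_or_lt_of_le ht with h0 | h0
  · subst h0
    have h1 : Set.EqOn f g (Set.Ici (0:ℝ)) := fun s hs => h s hs
    have hdf : HasDerivWithinAt f (deriv f 0) (Set.Ici 0) 0 :=
      (hf 0).hasDerivAt.hasDerivWithinAt
    have hdg : HasDerivWithinAt g (deriv g 0) (Set.Ici 0) 0 :=
      (hg 0).hasDerivAt.hasDerivWithinAt
    have hdg' : HasDerivWithinAt g (deriv f 0) (Set.Ici 0) 0 :=
      hdf.congr (fun s hs => (h1 hs).symm) ((h 0 le_rfl).symm)
    have e1 := hdg'.derivWithin ((uniqueDiffOn_Ici (0:ℝ)) 0 Set.self_mem_Ici)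
    have e2 := hdg.derivWithin ((uniqueDiffOn_Ici (0:ℝ)) 0 Set.self_mem_Ici)
    rw [← e1, ← e2]
  · have hev : f =ᶠ[nhds t] g := by
      filter_upwards [Ioi_mem_nhds h0] with s hs using h s (le_of_lt hs)
    exact hev.deriv_eq

lemma itder_add {m : ℕ} {f g : ℝ → H} (hf : ContDiff ℝ (m : ℕ) f)
    (hg : ContDiff ℝ (m : ℕ) g) (x : ℝ) :
    iteratedDeriv m (fun t => f t + g t) x = iteratedDeriv m f x + iteratedDeriv m g x := by
  have : (fun t => f t + g t) = f + g := rfl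
  rw [this, ← iteratedDerivWithin_univ, ← iteratedDerivWithin_univ, ← iteratedDerivWithin_univ]
  exact iteratedDerivWithin_add (Set.mem_univ x) uniqueDiffOn_univ
    (hf.contDiffWithinAt) (hg.contDiffWithinAt)

lemma Weq (A : H →L[ℝ] H) (u0 u1 : H) (k : ℕ) (U : ℝ → H)
    (hU3 : ContDiff ℝ ((2+1 : ℕ) : WithTop ℕ∞) U)
    (hUeq : ∀ t ≥ (0:ℝ),
      deriv (deriv U) t + A (U t) + deriv U t = -deriv (vl0 A u0 u1 k) t) :
    ∀ t ≥ (0:ℝ),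
      deriv (deriv (fun s => vl0 A u0 u1 k s + deriv U s)) t
        + A (vl0 A u0 u1 k t + deriv U t)
        + deriv (fun s => vl0 A u0 u1 k s + deriv U s) t
      = A (vl0 A u0 u1 k t) + dv A u0 u1 k t := by
  intro t ht
  obtain ⟨hUd, hU2⟩ := cd_deriv hU3
  obtain ⟨hU2d, hU1⟩ := cd_deriv hU2
  have hU1d : Differentiable ℝ (deriv (deriv U)) := hU1.differentiable (by exact_mod_cast (one_ne_zero : (1:ℕ) ≠ 0))
  have hdvd : Differentiable ℝ (dv A u0 u1 k) :=
    (dv_contDiff A u0 u1 k (n := 1)).differentiable one_ne_zero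
  -- deriv of W
  have hderW : deriv (fun s => vl0 A u0 u1 k s + deriv U s)
      = fun s => dv A u0 u1 k s + deriv (deriv U) s :=
    funext fun s => ((vl0_hasDerivAt A u0 u1 k s).add (hU2d s).hasDerivAt).deriv
  -- second deriv of W
  have hderW2 : deriv (deriv (fun s => vl0 A u0 u1 k s + deriv U s)) t
      = deriv (dv A u0 u1 k) t + deriv (deriv (deriv U)) t := by
    rw [hderW]
    exact deriv_add (hdvd t) (hU1d t)
  -- the differentiated equation
  have hAU : ∀ s, HasDerivAt (fun r => A (U r)) (A (deriv U s)) s := fun s =>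
    A.hasFDerivAt.comp_hasDerivAt s (hUd s).hasDerivAt
  have hfd : Differentiable ℝ (fun s => deriv (deriv U) s + A (U s) + deriv U s) :=
    (hU1d.add (fun s => (hAU s).differentiableAt)).add hU2d
  have hgd : Differentiable ℝ (fun s => -deriv (vl0 A u0 u1 k) s) := by
    rw [deriv_vl0]
    exact hdvd.neg
  have hEq2 := deriv_eq_on_nonneg hfd hgd hUeq t ht
  have h1 : deriv (fun s => deriv (deriv U) s + A (U s) + deriv U s) t
      = deriv (deriv (deriv U)) t + A (deriv U t) + deriv (deriv U) t := by
    rw [deriv_fun_add ((hU1d t).fun_add ((hAU t).differentiableAt)) (hU2d t),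
      deriv_fun_add (hU1d t) ((hAU t).differentiableAt), (hAU t).deriv]
  have h2 : deriv (fun s => -deriv (vl0 A u0 u1 k) s) t = -(deriv (dv A u0 u1 k) t) := by
    rw [deriv_vl0, deriv.fun_neg]
  rw [h1, h2] at hEq2
  rw [hderW2, hderW, map_add]
  calc deriv (dv A u0 u1 k) t + deriv (deriv (deriv U)) t
        + (A (vl0 A u0 u1 k t) + A (deriv U t))
        + (dv A u0 u1 k t + deriv (deriv U) t)
      = (deriv (deriv (deriv U)) t + A (deriv U t) + deriv (deriv U) t)
        + deriv (dv A u0 u1 k) t + A (vl0 A u0 u1 k t) + dv A u0 u1 k t := by abel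
    _ = A (vl0 A u0 u1 k t) + dv A u0 u1 k t := by rw [hEq2]; abel

/-- decomposition (2.7): if `U` solves
`U'' + A U + U' = −v_{n−1,0}'` with `U(0) = 0`, `U'(0) = (−1)ⁿ u1`, then
`u(t) = Σ_{ℓ<n} (d/dt)^ℓ v_{ℓ,0}(t) + (d/dt)ⁿ U(t)`. -/
theorem stmt_14 {H : Type u} [NormedAddCommGroup H] [InnerProductSpace ℝ H] [CompleteSpace H]
    (A : H →L[ℝ] H) (hA : IsSelfAdjoint A) (hApos : ∀ x : H, 0 ≤ ⟪A x, x⟫)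
    (n : ℕ) (hn : 1 ≤ n)
    (u : ℝ → H) (u0 u1 : H) (hu : ContDiff ℝ 2 u)
    (hueq : ∀ t ≥ (0:ℝ), deriv (deriv u) t + A (u t) + deriv u t = 0)
    (hu0 : u 0 = u0) (hu1 : deriv u 0 = u1)
    (U : ℝ → H) (hU : ContDiff ℝ (n + 2 : ℕ) U)
    (hUeq : ∀ t ≥ (0:ℝ),
      deriv (deriv U) t + A (U t) + deriv U t = -deriv (vl0 A u0 u1 (n - 1)) t)
    (hU0 : U 0 = 0) (hU1 : deriv U 0 = ((-1 : ℝ) ^ n) • u1) :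
    ∀ t ≥ (0:ℝ),
      u t = (∑ ℓ ∈ Finset.range n, iteratedDeriv ℓ (vl0 A u0 u1 ℓ) t)
        + iteratedDeriv n U t := by
  -- facts about u
  have hu' : ContDiff ℝ ((1+1 : ℕ) : WithTop ℕ∞) u := by exact_mod_cast hu
  obtain ⟨hud, hu1'⟩ := cd_deriv hu'
  have hu1d : Differentiable ℝ (deriv u) := hu1'.differentiable (by exact_mod_cast (one_ne_zero : (1:ℕ) ≠ 0))
  revert U
  induction n, hn using Nat.le_induction with
  | base =>
    intro U hU hUeq hU0 hU1
    simp only [Nat.sub_self] at hUeq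
    -- facts about U (C³)
    have hU3 : ContDiff ℝ ((2+1 : ℕ) : WithTop ℕ∞) U := by exact_mod_cast hU
    obtain ⟨hUd, hU2⟩ := cd_deriv hU3
    obtain ⟨hU2d, hU1'⟩ := cd_deriv hU2
    have hU1d : Differentiable ℝ (deriv (deriv U)) := hU1'.differentiable (by exact_mod_cast (one_ne_zero : (1:ℕ) ≠ 0))
    have hdvd : Differentiable ℝ (dv A u0 u1 0) :=
      (dv_contDiff A u0 u1 0 (n := 1)).differentiable one_ne_zero
    set z : ℝ → H := fun s => vl0 A u0 u1 0 s + deriv U s with hzdef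
    have hzd : Differentiable ℝ z := fun s =>
      ((vl0_hasDerivAt A u0 u1 0 s).differentiableAt).add (hU2d s)
    have hderz : deriv z = fun s => dv A u0 u1 0 s + deriv (deriv U) s :=
      funext fun s => ((vl0_hasDerivAt A u0 u1 0 s).add (hU2d s).hasDerivAt).deriv
    have hzd' : Differentiable ℝ (deriv z) := by
      rw [hderz]; exact hdvd.add hU1d
    have hzeq : ∀ t ≥ (0:ℝ), deriv (deriv z) t + A (z t) + deriv z t = 0 := by
      intro t ht
      have := Weq A u0 u1 0 U hU3 hUeq t ht
      rw [hzdef, this, dv0]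
    have hz0 : u 0 = z 0 := by
      rw [hzdef]
      simp only [vl0_zero0, hU1, hu0, pow_one, neg_one_smul]
      abel
    have hz1 : deriv u 0 = deriv z 0 := by
      have he := hUeq 0 le_rfl
      rw [hU0, map_zero, hU1, deriv_vl0] at he
      have hdd : deriv (deriv U) 0 = -(dv A u0 u1 0 0) - (-1:ℝ)^1 • u1 := by
        rw [eq_sub_iff_add_eq, eq_neg_iff_add_eq_zero]
        linear_combination (norm := abel) he
      rw [hu1]
      simp only [hderz]
      rw [hdd]
      simp only [pow_one, neg_one_smul, sub_neg_eq_add]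
      abel
    have := uniq A u z hud hu1d hzd hzd' hueq hzeq hz0 hz1
    intro t ht
    rw [this t ht, hzdef]
    simp [Finset.sum_range_one, iteratedDeriv_one]
  | succ n hn IH =>
    intro U hU hUeq hU0 hU1
    obtain ⟨m, rfl⟩ : ∃ m, n = m + 1 := ⟨n - 1, (Nat.succ_pred_eq_of_pos hn).symm⟩
    simp only [Nat.add_sub_cancel] at hUeq
    -- facts about U (C^{m+4})
    have hU' : ContDiff ℝ (((m+3)+1 : ℕ) : WithTop ℕ∞) U := by exact_mod_cast hU
    obtain ⟨hUd, hdU⟩ := cd_deriv hU'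
    have hU3 : ContDiff ℝ ((2+1 : ℕ) : WithTop ℕ∞) U :=
      hU'.of_le (by exact_mod_cast (by omega : (2+1 : ℕ) ≤ (m+3)+1))
    have hU2d : Differentiable ℝ (deriv U) :=
      hdU.differentiable (by exact_mod_cast (by omega : (m+3:ℕ) ≠ 0))
    set W : ℝ → H := fun s => vl0 A u0 u1 (m+1) s + deriv U s with hWdef
    have hW : ContDiff ℝ ((m + 1 + 2 : ℕ) : WithTop ℕ∞) W := by
      refine (vl0_contDiff A u0 u1 (m+1)).add ?_
      exact hdU.of_le (by exact_mod_cast (by omega : (m+1+2 : ℕ) ≤ m+3))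
    have hWeq : ∀ t ≥ (0:ℝ),
        deriv (deriv W) t + A (W t) + deriv W t
          = -deriv (vl0 A u0 u1 (m + 1 - 1)) t := by
      intro t ht
      have h1 := Weq A u0 u1 (m+1) U hU3 hUeq t ht
      have h2 := keyid A u0 u1 m t
      simp only [Nat.add_sub_cancel, deriv_vl0]
      rw [hWdef, h1, ← h2]
      abel
    have hderW : deriv W = fun s => dv A u0 u1 (m+1) s + deriv (deriv U) s :=
      funext fun s => ((vl0_hasDerivAt A u0 u1 (m+1) s).add (hU2d s).hasDerivAt).deriv
    have hW0 : W 0 = 0 := by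
      rw [hWdef]
      simp only [vl0_zero_succ, hU1]
      have : (-1:ℝ)^(m+1+1) = -((-1:ℝ)^(m+1)) := by ring
      rw [this, neg_smul]
      abel
    have hW1 : deriv W 0 = ((-1:ℝ)^(m+1)) • u1 := by
      have he := hUeq 0 le_rfl
      rw [hU0, map_zero, hU1, deriv_vl0] at he
      have hdd : deriv (deriv U) 0 = -(dv A u0 u1 (m+1) 0) - (-1:ℝ)^(m+1+1) • u1 := by
        rw [eq_sub_iff_add_eq, eq_neg_iff_add_eq_zero]
        linear_combination (norm := abel) he
      simp only [hderW]
      rw [hdd]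
      have : (-1:ℝ)^(m+1+1) = -((-1:ℝ)^(m+1)) := by ring
      rw [this, neg_smul]
      abel
    have hIH := IH W hW hWeq hW0 hW1
    intro t ht
    have hsplit : iteratedDeriv (m+1) W t
        = iteratedDeriv (m+1) (vl0 A u0 u1 (m+1)) t
          + iteratedDeriv (m+1) (deriv U) t := by
      rw [hWdef]
      exact itder_add (vl0_contDiff A u0 u1 (m+1))
        (hdU.of_le (by exact_mod_cast (by omega : (m+1 : ℕ) ≤ m+3))) t
    rw [Finset.sum_range_succ, hIH t ht, hsplit]
    have hsucc : iteratedDeriv (m+1+1) U t = iteratedDeriv (m+1) (deriv U) t := by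
      rw [iteratedDeriv_succ']
    rw [hsucc]
    abel
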